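/- Let x0, y0, z0 > 0. There exists a compatible resistance sequence (x_n, y_n, z_n)_{n≥0} of positive triples with initial triple (x0, y0, z0) if and only if, after a permutation of the three coordinates, x0 ≥ y0 = z0 (i.e., two of the three initial values are equal and do not exceed the third). Moreover, in that case the sequence satisfies x_n ≥ y_n = z_n > 0 for all n ≥ 0 (in the same coordinates). -/

import Mathlib

noncomputable section

/-- Δ-Y transfer term `φ(x; y, z) = (x+y)(x+z)/(2(x+y+z))`. -/
def phi (x y z : ℝ) : ℝ := (x + y) * (x + z) / (2 * (x + y + z))

/-- A compatible resistance sequence of positive triples. -/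
def IsCompat (X Y Z : ℕ → ℝ) : Prop :=
  (∀ n, 0 < X n ∧ 0 < Y n ∧ 0 < Z n) ∧
  ∀ n, X n = X (n + 1) + phi (X (n + 1)) (Y (n + 1)) (Z (n + 1)) ∧
       Y n = Y (n + 1) + phi (Y (n + 1)) (Z (n + 1)) (X (n + 1)) ∧
       Z n = Z (n + 1) + phi (Z (n + 1)) (X (n + 1)) (Y (n + 1))

namespace Stmt0Aux

open Filter Set

lemma phi_symm (x y z : ℝ) : phi x y z = phi x z y := by
  unfold phi; ring_nf

lemma compat_cycle {X Y Z : ℕ → ℝ} (h : IsCompat X Y Z) : IsCompat Z X Y := by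
  obtain ⟨hp, he⟩ := h
  exact ⟨fun n => ⟨(hp n).2.2, (hp n).1, (hp n).2.1⟩,
    fun n => ⟨(he n).2.2, (he n).1, (he n).2.1⟩⟩

lemma compat_swap {X Y Z : ℕ → ℝ} (h : IsCompat X Y Z) : IsCompat X Z Y := by
  obtain ⟨hp, he⟩ := h
  refine ⟨fun n => ⟨(hp n).1, (hp n).2.2, (hp n).2.1⟩, fun n => ?_⟩
  obtain ⟨h1, h2, h3⟩ := he n
  exact ⟨by rw [phi_symm]; exact h1, by rw [phi_symm]; exact h3,
    by rw [phi_symm]; exact h2⟩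

/-- Difference recursion: `(X n - Y n) * 2s' = (X'-Y') * (2s' + X' + Y')`. -/
lemma diff_mul {X Y Z : ℕ → ℝ} (h : IsCompat X Y Z) (n : ℕ) :
    (X n - Y n) * (2 * (X (n+1) + Y (n+1) + Z (n+1)))
      = (X (n+1) - Y (n+1)) * (2 * (X (n+1) + Y (n+1) + Z (n+1)) + X (n+1) + Y (n+1)) := by
  obtain ⟨hp, he⟩ := h
  obtain ⟨ha, hb, hc⟩ := hp (n+1)
  obtain ⟨h1, h2, h3⟩ := he n
  have hs : X (n+1) + Y (n+1) + Z (n+1) ≠ 0 := by positivity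
  rw [h1, h2]
  unfold phi
  field_simp
  ring

/-- Sum recursion: `(X n + Y n + Z n) * 2s' = 3 s'^2 + q'`. -/
lemma sum_mul {X Y Z : ℕ → ℝ} (h : IsCompat X Y Z) (n : ℕ) :
    (X n + Y n + Z n) * (2 * (X (n+1) + Y (n+1) + Z (n+1)))
      = 3 * (X (n+1) + Y (n+1) + Z (n+1))^2
        + (X (n+1) * Y (n+1) + Y (n+1) * Z (n+1) + Z (n+1) * X (n+1)) := by
  obtain ⟨hp, he⟩ := h
  obtain ⟨ha, hb, hc⟩ := hp (n+1)
  obtain ⟨h1, h2, h3⟩ := he n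
  have hs : X (n+1) + Y (n+1) + Z (n+1) ≠ 0 := by positivity
  rw [h1, h2, h3]
  unfold phi
  field_simp
  ring

/-- Order preservation. -/
lemma mono {X Y Z : ℕ → ℝ} (h : IsCompat X Y Z) (h0 : Y 0 ≤ X 0) :
    ∀ n, Y n ≤ X n := by
  intro n
  induction n with
  | zero => exact h0
  | succ n ih =>
    have hd := diff_mul h n
    obtain ⟨ha, hb, hc⟩ := h.1 (n+1)
    nlinarith [h.1 n]

/-- Equality propagation. -/
lemma eq_prop {X Y Z : ℕ → ℝ} (h : IsCompat X Y Z) (h0 : X 0 = Y 0) :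
    ∀ n, X n = Y n := by
  intro n
  induction n with
  | zero => exact h0
  | succ n ih =>
    have hd := diff_mul h n
    obtain ⟨ha, hb, hc⟩ := h.1 (n+1)
    nlinarith

lemma core (a b c : ℝ) (ha : 0 < a) (hb : 0 < b) (hc : 0 < c) (hab : b ≤ a) (hac : c ≤ a) :
    9 * (2*(a+b+c) + b + c) * (a+b+c) ≤ 8 * (3*(a+b+c)^2 + (a*b + b*c + c*a)) := by
  nlinarith [mul_pos hb hc, mul_pos ha hb, mul_pos ha hc, sq_nonneg (a+b+c),
    mul_le_mul_of_nonneg_left hab (le_of_lt (by positivity : (0:ℝ) < a+b+c)),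
    mul_le_mul_of_nonneg_left hac (le_of_lt (by positivity : (0:ℝ) < a+b+c))]

/-- Key rigidity: if the first coordinate dominates, the other two coincide. -/
lemma key {X Y Z : ℕ → ℝ} (h : IsCompat X Y Z) (hYX : Y 0 ≤ X 0) (hZX : Z 0 ≤ X 0)
    (hZY : Z 0 ≤ Y 0) : Y 0 = Z 0 := by
  have hYXn : ∀ n, Y n ≤ X n := mono h hYX
  have hZXn : ∀ n, Z n ≤ X n := mono (compat_swap h) hZX
  have hZYn : ∀ n, Z n ≤ Y n := mono (compat_cycle (compat_cycle h)) hZY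
  set d : ℕ → ℝ := fun n => Y n - Z n with hd
  set s : ℕ → ℝ := fun n => X n + Y n + Z n with hs
  have hs0 : ∀ n, 0 < s n := fun n => by
    obtain ⟨h1, h2, h3⟩ := h.1 n; simp only [hs]; positivity
  have step : ∀ n, d n / s n ≤ 8/9 * (d (n+1) / s (n+1)) := by
    intro n
    obtain ⟨ha, hb, hc⟩ := h.1 (n+1)
    have hdm : d n * (2 * s (n+1))
        = (Y (n+1) - Z (n+1)) * (2 * s (n+1) + Y (n+1) + Z (n+1)) := by
      have := diff_mul (compat_cycle (compat_cycle h)) n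
      simp only [hd, hs]; linear_combination this
    have hsm : s n * (2 * s (n+1))
        = 3 * (s (n+1))^2 + (X (n+1) * Y (n+1) + Y (n+1) * Z (n+1) + Z (n+1) * X (n+1)) := by
      have := sum_mul h n
      simp only [hd, hs]; linear_combination this
    have hcore := core (X (n+1)) (Y (n+1)) (Z (n+1)) ha hb hc (hYXn (n+1)) (hZXn (n+1))
    have hd' : 0 ≤ Y (n+1) - Z (n+1) := by linarith [hZYn (n+1)]
    have hs' : 0 < s (n+1) := hs0 (n+1)
    have cross : d n * (9 * s (n+1)) ≤ 8 * (Y (n+1) - Z (n+1)) * s n := by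
      have h2 : 9 * ((Y (n+1) - Z (n+1)) * (2 * s (n+1) + Y (n+1) + Z (n+1))) * s (n+1)
          ≤ 8 * (Y (n+1) - Z (n+1))
            * (3 * (s (n+1))^2 + (X (n+1) * Y (n+1) + Y (n+1) * Z (n+1) + Z (n+1) * X (n+1))) := by
        have := mul_le_mul_of_nonneg_left hcore hd'
        simp only [hs] at *
        nlinarith [this]
      nlinarith [h2, hdm, hsm, hs']
    rw [show (8:ℝ)/9 * ((Y (n+1) - Z (n+1)) / s (n+1))
        = (8 * (Y (n+1) - Z (n+1))) / (9 * s (n+1)) from div_mul_div_comm 8 9 _ _,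
      div_le_div_iff₀ (hs0 n) (by positivity)]
    linarith [cross]
  have main : ∀ n, d 0 / s 0 ≤ (8/9:ℝ)^n * (d n / s n) := by
    intro n
    induction n with
    | zero => simp
    | succ n ih =>
      calc d 0 / s 0 ≤ (8/9:ℝ)^n * (d n / s n) := ih
        _ ≤ (8/9:ℝ)^n * (8/9 * (d (n+1) / s (n+1))) :=
            mul_le_mul_of_nonneg_left (step n) (by positivity)
        _ = (8/9:ℝ)^(n+1) * (d (n+1) / s (n+1)) := by ring
  have hbound : ∀ n, d 0 / s 0 ≤ (8/9:ℝ)^n := by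
    intro n
    have h1 : d n / s n ≤ 1 := by
      rw [div_le_one (hs0 n)]
      obtain ⟨hX, hY, hZ⟩ := h.1 n
      simp only [hd, hs]; linarith
    calc d 0 / s 0 ≤ (8/9:ℝ)^n * (d n / s n) := main n
      _ ≤ (8/9:ℝ)^n * 1 := mul_le_mul_of_nonneg_left h1 (by positivity)
      _ = (8/9:ℝ)^n := mul_one _
  have hlim : Tendsto (fun n : ℕ => ((8:ℝ)/9)^n) atTop (nhds 0) :=
    tendsto_pow_atTop_nhds_zero_of_lt_one (by norm_num) (by norm_num)
  have hle : d 0 / s 0 ≤ 0 := ge_of_tendsto' hlim hbound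
  have : d 0 ≤ 0 := by
    by_contra hpos
    push_neg at hpos
    have : 0 < d 0 / s 0 := div_pos hpos (hs0 0)
    linarith
  simp only [hd] at this
  linarith [hZY]

/-- Key rigidity without assuming an order between the two small coordinates. -/
lemma key' {X Y Z : ℕ → ℝ} (h : IsCompat X Y Z) (hYX : Y 0 ≤ X 0) (hZX : Z 0 ≤ X 0) :
    Y 0 = Z 0 := by
  rcases le_total (Z 0) (Y 0) with hZY | hYZ
  · exact key h hYX hZX hZY
  · exact (key (compat_swap h) hZX hYX hYZ).symm

/-- Ratio map `g(t) = (3t²+6t+1)/(4t+6)` is onto `[1,∞)` from `[1,∞)`. -/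
lemma g_surj (t0 : ℝ) (h : 1 ≤ t0) :
    ∃ t, 1 ≤ t ∧ (3*t^2 + 6*t + 1) / (4*t + 6) = t0 := by
  set f : ℝ → ℝ := fun t => (3*t^2 + 6*t + 1) / (4*t + 6) with hf
  have hcont : ContinuousOn f (Icc 1 (4*t0)) := by
    apply ContinuousOn.div
    · fun_prop
    · fun_prop
    · intro x hx
      have : (1:ℝ) ≤ x := hx.1
      positivity
  have h1 : f 1 = 1 := by norm_num [hf]
  have h2 : t0 ≤ f (4*t0) := by
    rw [hf]
    rw [le_div_iff₀ (by positivity)]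
    nlinarith
  have hsub := intermediate_value_Icc (by nlinarith : (1:ℝ) ≤ 4*t0) hcont
  have : t0 ∈ Icc (f 1) (f (4*t0)) := by rw [h1]; exact ⟨h, h2⟩
  obtain ⟨t, ht, hft⟩ := hsub this
  exact ⟨t, ht.1, hft⟩

/-- Choice of a `g`-preimage. -/
def nextT (t0 : ℝ) : ℝ := if h : 1 ≤ t0 then (g_surj t0 h).choose else 1

lemma nextT_spec {t0 : ℝ} (h : 1 ≤ t0) :
    1 ≤ nextT t0 ∧ (3*(nextT t0)^2 + 6*(nextT t0) + 1) / (4*(nextT t0) + 6) = t0 := by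
  rw [nextT, dif_pos h]
  exact (g_surj t0 h).choose_spec

/-- Iterated ratio sequence. -/
def Tseq (t0 : ℝ) (n : ℕ) : ℝ := nextT^[n] t0

lemma Tseq_succ (t0 : ℝ) (n : ℕ) : Tseq t0 (n+1) = nextT (Tseq t0 n) :=
  Function.iterate_succ_apply' _ _ _

lemma Tseq_ge {t0 : ℝ} (h : 1 ≤ t0) : ∀ n, 1 ≤ Tseq t0 n := by
  intro n
  induction n with
  | zero => exact h
  | succ n ih => rw [Tseq_succ]; exact (nextT_spec ih).1

lemma Tseq_eq {t0 : ℝ} (h : 1 ≤ t0) (n : ℕ) :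
    (3*(Tseq t0 (n+1))^2 + 6*(Tseq t0 (n+1)) + 1) / (4*(Tseq t0 (n+1)) + 6) = Tseq t0 n := by
  rw [Tseq_succ]; exact (nextT_spec (Tseq_ge h n)).2

/-- Scale sequence. -/
def Yseq (t0 y0 : ℝ) : ℕ → ℝ
  | 0 => y0
  | n+1 => Yseq t0 y0 n * (Tseq t0 (n+1) + 2) / (2 * Tseq t0 (n+1) + 3)

lemma Yseq_pos {t0 y0 : ℝ} (ht : 1 ≤ t0) (hy : 0 < y0) : ∀ n, 0 < Yseq t0 y0 n := by
  intro n
  induction n with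
  | zero => exact hy
  | succ n ih =>
    have h1 := Tseq_ge ht (n+1)
    show 0 < Yseq t0 y0 n * (Tseq t0 (n+1) + 2) / (2 * Tseq t0 (n+1) + 3)
    positivity

/-- Construction of a compatible sequence in the case `y0 = z0 ≤ x0`. -/
lemma construct (x0 y0 : ℝ) (hy : 0 < y0) (hxy : y0 ≤ x0) :
    ∃ X Y Z : ℕ → ℝ, IsCompat X Y Z ∧ X 0 = x0 ∧ Y 0 = y0 ∧ Z 0 = y0 := by
  set t0 : ℝ := x0 / y0 with ht0
  have ht : 1 ≤ t0 := (one_le_div hy).mpr hxy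
  set T : ℕ → ℝ := Tseq t0 with hT
  set W : ℕ → ℝ := Yseq t0 y0 with hW
  have hTg : ∀ n, 1 ≤ T n := Tseq_ge ht
  have hWp : ∀ n, 0 < W n := Yseq_pos ht hy
  refine ⟨fun n => T n * W n, W, W, ⟨fun n => ⟨?_, hWp n, hWp n⟩, fun n => ?_⟩, ?_, rfl, rfl⟩
  · have := hTg n; have := hWp n; positivity
  · have ht1 : 1 ≤ T (n+1) := hTg (n+1)
    have hw1 : 0 < W (n+1) := hWp (n+1)
    have hWrec : W n = W (n+1) * (2 * T (n+1) + 3) / (T (n+1) + 2) := by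
      have : W (n+1) = W n * (T (n+1) + 2) / (2 * T (n+1) + 3) := rfl
      rw [this]; field_simp
    have hTrec : T n = (3*(T (n+1))^2 + 6*(T (n+1)) + 1) / (4*(T (n+1)) + 6) :=
      (Tseq_eq ht n).symm
    refine ⟨?_, ?_, ?_⟩
    · show T n * W n = T (n+1) * W (n+1) + phi (T (n+1) * W (n+1)) (W (n+1)) (W (n+1))
      rw [hTrec, hWrec]
      unfold phi
      have h1 : T (n+1) + 2 ≠ 0 := by linarith
      have h2 : (4:ℝ)*(T (n+1)) + 6 ≠ 0 := by linarith
      have h3 : 2 * (T (n+1) * W (n+1) + W (n+1) + W (n+1)) ≠ 0 := by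
        have : 0 < T (n+1) * W (n+1) := by positivity
        positivity
      field_simp
      ring
    · show W n = W (n+1) + phi (W (n+1)) (W (n+1)) (T (n+1) * W (n+1))
      rw [hWrec]
      unfold phi
      have h1 : T (n+1) + 2 ≠ 0 := by linarith
      have h3 : 2 * (W (n+1) + W (n+1) + T (n+1) * W (n+1)) ≠ 0 := by
        have : 0 < T (n+1) * W (n+1) := by positivity
        positivity
      field_simp
      ring
    · show W n = W (n+1) + phi (W (n+1)) (T (n+1) * W (n+1)) (W (n+1))
      rw [hWrec]
      unfold phi
      have h1 : T (n+1) + 2 ≠ 0 := by linarith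
      have h3 : 2 * (W (n+1) + T (n+1) * W (n+1) + W (n+1)) ≠ 0 := by
        have : 0 < T (n+1) * W (n+1) := by positivity
        positivity
      field_simp
      ring
  · show T 0 * W 0 = x0
    simp only [hT, hW, Tseq, Yseq, Function.iterate_zero_apply]
    field_simp [ht0]
    rw [ht0]; exact div_mul_cancel₀ x0 hy.ne'

end Stmt0Aux

open Stmt0Aux in
theorem stmt0 (x0 y0 z0 : ℝ) (hx : 0 < x0) (hy : 0 < y0) (hz : 0 < z0) :
    ((∃ X Y Z : ℕ → ℝ, IsCompat X Y Z ∧ X 0 = x0 ∧ Y 0 = y0 ∧ Z 0 = z0) ↔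
      ((y0 = z0 ∧ y0 ≤ x0) ∨ (z0 = x0 ∧ z0 ≤ y0) ∨ (x0 = y0 ∧ x0 ≤ z0))) ∧
    (∀ X Y Z : ℕ → ℝ, IsCompat X Y Z → X 0 = x0 → Y 0 = y0 → Z 0 = z0 →
      y0 = z0 → y0 ≤ x0 → ∀ n, Y n = Z n ∧ Y n ≤ X n) := by
  constructor
  · constructor
    · rintro ⟨X, Y, Z, hc, hX0, hY0, hZ0⟩
      subst hX0; subst hY0; subst hZ0
      rcases le_total (Y 0) (X 0) with hxy | hxy
      · rcases le_total (Z 0) (X 0) with hzx | hzx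
        · exact Or.inl ⟨key' hc hxy hzx, hxy⟩
        · -- X 0 is between: Y 0 ≤ X 0 ≤ Z 0, so Z 0 is the max
          exact Or.inr (Or.inr ⟨key' (compat_cycle hc) hzx (le_trans hxy hzx), hzx⟩)
      · rcases le_total (Z 0) (Y 0) with hzy | hzy
        · -- Y 0 is the max
          exact Or.inr (Or.inl ⟨key' (compat_cycle (compat_cycle hc)) hzy hxy, hzy⟩)
        · -- Z 0 is the max
          exact Or.inr (Or.inr ⟨key' (compat_cycle hc) (le_trans hxy hzy) hzy, le_trans hxy hzy⟩)
    · rintro (⟨he, hle⟩ | ⟨he, hle⟩ | ⟨he, hle⟩)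
      · obtain ⟨X, Y, Z, hc, h1, h2, h3⟩ := construct x0 y0 hy hle
        exact ⟨X, Y, Z, hc, h1, h2, by rw [h3, he]⟩
      · obtain ⟨X, Y, Z, hc, h1, h2, h3⟩ := construct y0 z0 hz hle
        exact ⟨Z, X, Y, compat_cycle hc, by rw [h3, ← he], h1, h2⟩
      · obtain ⟨X, Y, Z, hc, h1, h2, h3⟩ := construct z0 x0 hx hle
        exact ⟨Y, Z, X, compat_cycle (compat_cycle hc), h2, by rw [h3, he], h1⟩
  · intro X Y Z hc hX0 hY0 hZ0 he hle n
    constructor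
    · exact eq_prop (compat_cycle (compat_cycle hc)) (by rw [hY0, hZ0]; exact he) n
    · exact mono hc (by rw [hY0, hX0]; exact hle) n
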